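/- Consider a k-channel linear system given by real matrices A ∈ ℝ^{n×n}, B_i ∈ ℝ^{n×m_i}, C_i ∈ ℝ^{l_i×n} for i ∈ {1, …, k}, and let λ ∈ ℂ. If for every choice of real matrices F_i ∈ ℝ^{m_i×l_i} one has rank(λI_n − A − ∑_{i=1}^k B_i F_i C_i) < n over ℂ (i.e., λ is in the fixed spectrum of the system), then there exists a subset S ⊆ {1, …, k} such that the block matrix [[λI_n − A, B_S],[C_{complement}, 0]] has rank < n over ℂ. -/

import Mathlib

set_option linter.unusedSectionVars false
set_option maxHeartbeats 1000000

open Matrix Finset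

variable {K : Type*} [Field K]

section RankTools

variable {p q p' q' : Type*} [Fintype p] [Fintype q] [Fintype p'] [Fintype q']

/-- rank comparison via column spans. -/
lemma rank_le_of_cols_mem (M : Matrix p q K) (M' : Matrix p q' K)
    (h : ∀ c, M'ᵀ c ∈ Submodule.span K (Set.range Mᵀ)) : M'.rank ≤ M.rank := by
  rw [Matrix.rank_eq_finrank_span_cols, Matrix.rank_eq_finrank_span_cols]
  exact Submodule.finrank_mono (Submodule.span_le.2 (Set.range_subset_iff.2 h))

lemma rank_le_of_rows_mem [Fintype p] (M : Matrix p q K) (M' : Matrix p' q K)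
    (h : ∀ r, M' r ∈ Submodule.span K (Set.range M)) : M'.rank ≤ M.rank := by
  rw [← Matrix.rank_transpose M, ← Matrix.rank_transpose M']
  exact rank_le_of_cols_mem Mᵀ M'ᵀ (by simpa using h)

/-- general submatrix rank bound (no injectivity needed) -/
lemma rank_submatrix_le' (M : Matrix p q K) (f : p' → p) (g : q' → q) :
    (M.submatrix f g).rank ≤ M.rank := by
  classical
  have h1 : M.submatrix f id = (Matrix.of fun (x : p') (r : p) =>
      if r = f x then (1 : K) else 0) * M := by
    ext x y
    rw [Matrix.mul_apply]
    simp only [Matrix.of_apply, Matrix.submatrix_apply, id_eq, ite_mul, one_mul, zero_mul]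
    rw [Finset.sum_ite_eq' Finset.univ (f x) (fun r => M r y)]
    simp
  have h2 : M.submatrix f g = (M.submatrix f id) * (Matrix.of fun (c : q) (y : q') =>
      if c = g y then (1 : K) else 0) := by
    ext x y
    rw [Matrix.mul_apply]
    simp only [Matrix.of_apply, Matrix.submatrix_apply, id_eq, mul_ite, mul_one, mul_zero]
    rw [Finset.sum_ite_eq' Finset.univ (g y) (fun c => M (f x) c)]
    simp
  calc (M.submatrix f g).rank ≤ (M.submatrix f id).rank := by
        rw [h2]; exact Matrix.rank_mul_le_left _ _
    _ ≤ M.rank := by rw [h1]; exact Matrix.rank_mul_le_right _ _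

/-- zero-row-padding preserves rank -/
lemma rank_eq_of_row_padding (M : Matrix p q K) (M' : Matrix p' q K) (f : p → p')
    (hf : Function.Injective f)
    (h1 : ∀ x y, M' (f x) y = M x y)
    (h2 : ∀ r, (∀ x, r ≠ f x) → ∀ y, M' r y = 0) :
    M'.rank = M.rank := by
  classical
  refine le_antisymm ?_ ?_
  · -- M' = J * M
    have : M' = (Matrix.of fun (r : p') (x : p) => if r = f x then (1:K) else 0) * M := by
      ext r y
      rw [Matrix.mul_apply]
      simp only [Matrix.of_apply, ite_mul, one_mul, zero_mul]
      by_cases hr : ∃ x, r = f x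
      · obtain ⟨x₀, rfl⟩ := hr
        rw [Finset.sum_eq_single x₀]
        · rw [if_pos rfl, h1]
        · intro b _ hb
          rw [if_neg]
          exact fun hfb => hb (hf hfb.symm)
        · intro hx; exact absurd (Finset.mem_univ x₀) hx
      · push_neg at hr
        rw [Finset.sum_eq_zero (fun b _ => if_neg (hr b))]
        exact h2 r hr y
    rw [this]
    exact Matrix.rank_mul_le_right _ _
  · have : M = M'.submatrix f id := by
      ext x y; rw [Matrix.submatrix_apply, h1]; rfl
    rw [this]
    exact rank_submatrix_le' M' f id


lemma det_ne_zero_of_rank_le {p : Type*} [Fintype p] [DecidableEq p] (M : Matrix p p K)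
    (h : Fintype.card p ≤ M.rank) : M.det ≠ 0 := by
  intro hdet
  obtain ⟨v, hv, hMv⟩ := (Matrix.exists_mulVec_eq_zero_iff.2 hdet)
  have hker : v ∈ LinearMap.ker M.mulVecLin := by
    simpa [Matrix.mulVecLin_apply] using hMv
  have h0 : LinearMap.ker M.mulVecLin ≠ ⊥ := fun hbot => hv (by
    rw [hbot] at hker; simpa using hker)
  have h1 : 1 ≤ Module.finrank K (LinearMap.ker M.mulVecLin) := by
    by_contra hlt
    push_neg at hlt
    exact h0 (Submodule.finrank_eq_zero.1 (by omega))
  have h2 := LinearMap.finrank_range_add_finrank_ker M.mulVecLin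
  rw [Module.finrank_pi] at h2
  have : M.rank = Module.finrank K (LinearMap.range M.mulVecLin) := rfl
  omega

lemma rank_ge_of_submatrix_det {nn : ℕ} (M : Matrix p q K) (f : Fin nn → p) (g : Fin nn → q)
    (h : (M.submatrix f g).det ≠ 0) : nn ≤ M.rank := by
  classical
  have h1 : (M.submatrix f g).rank = nn := by
    rw [Matrix.rank_of_isUnit _ (Matrix.isUnit_iff_isUnit_det _ |>.2 (Ne.isUnit h))]
    simp
  calc (nn : ℕ) = (M.submatrix f g).rank := h1.symm
    _ ≤ M.rank := rank_submatrix_le' M f g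

/-- extraction of independent columns -/
lemma exists_indep_cols {nn : ℕ} (M : Matrix p q K) (h : nn ≤ M.rank) :
    ∃ g : Fin nn → q, LinearIndependent K (fun i => Mᵀ (g i)) := by
  classical
  obtain ⟨b, hbsub, hbspan, hbind⟩ := exists_linearIndependent K (Set.range Mᵀ)
  have hbfin : b.Finite := Set.Finite.subset (Set.finite_range _) hbsub
  haveI : Fintype b := hbfin.fintype
  have hcard : nn ≤ Fintype.card b := by
    have h2 : Module.finrank K (Submodule.span K b) = b.toFinset.card :=
      finrank_span_set_eq_card hbind
    have h3 : nn ≤ Module.finrank K (Submodule.span K b) := by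
      rw [hbspan]
      exact le_trans h (le_of_eq (Matrix.rank_eq_finrank_span_cols M))
    rw [h2, Set.toFinset_card] at h3
    exact h3
  obtain ⟨emb⟩ : Nonempty (Fin nn ↪ b) := by
    apply Function.Embedding.nonempty_of_card_le
    simpa using hcard
  have hmem : ∀ i : Fin nn, (emb i).1 ∈ Set.range Mᵀ := fun i => hbsub (emb i).2
  choose g hg using hmem
  refine ⟨g, ?_⟩
  have : (fun i => Mᵀ (g i)) = (fun (x : b) => (x : p → K)) ∘ emb := by
    funext i; simpa [Function.comp] using hg i
  rw [this]
  exact hbind.comp emb emb.injective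

lemma exists_submatrix_det_ne_zero {nn : ℕ} (M : Matrix p q K) (h : nn ≤ M.rank) :
    ∃ (f : Fin nn → p) (g : Fin nn → q), (M.submatrix f g).det ≠ 0 := by
  classical
  obtain ⟨g, hg⟩ := exists_indep_cols M h
  set M₁ := M.submatrix id g with hM₁
  have hrank1 : M₁.rank = nn := by
    have : M₁ᵀ = fun i => Mᵀ (g i) := by
      funext i x; simp [hM₁]
    rw [Matrix.rank_eq_finrank_span_cols, show M₁.col = M₁ᵀ from rfl, this, finrank_span_eq_card hg]
    simp
  have hrank1T : nn ≤ (M₁ᵀ).rank := by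
    rw [Matrix.rank_transpose]; omega
  obtain ⟨f, hf⟩ := exists_indep_cols (M₁ᵀ) hrank1T
  refine ⟨f, g, ?_⟩
  -- rows of M.submatrix f g are the vectors (M₁ᵀᵀ (f i)) = fun i => M₁ (f i)
  intro hdet
  have hdetT : (M.submatrix f g)ᵀ.det = 0 := by rw [Matrix.det_transpose]; exact hdet
  obtain ⟨v, hv, hMv⟩ := Matrix.exists_mulVec_eq_zero_iff.2 hdetT
  have : ∑ i, v i • (fun j => M₁ (f i) j) = 0 := by
    funext j
    have := congrFun hMv j
    simp only [Matrix.mulVec, dotProduct, Matrix.transpose_apply,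
      Matrix.submatrix_apply] at this
    simpa [Finset.sum_apply, hM₁, mul_comm] using this
  have hind : LinearIndependent K (fun i => (M₁ (f i) : Fin nn → K)) := by
    have he : (fun i => (M₁ᵀ)ᵀ (f i)) = fun i => M₁ (f i) := by
      funext i; simp
    rw [← he]; exact hf
  have := Fintype.linearIndependent_iff.1 hind v (by simpa using this)
  exact hv (funext this)

end RankTools

section SingleChannel
variable {p q r s : Type*} [Fintype p] [Fintype q] [Fintype r] [Fintype s]

lemma vecMulVec_mulVec (b : p → K) (c : q → K) (x : q → K) :
    Matrix.vecMulVec b c *ᵥ x = (c ⬝ᵥ x) • b := by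
  funext i
  simp [Matrix.mulVec, Matrix.vecMulVec_apply, dotProduct, Finset.mul_sum,
    mul_assoc, mul_comm, mul_left_comm, Finset.sum_mul]

lemma rank_lt_rank_add_vecMulVec (M : Matrix p q K) (b : p → K) (c : q → K) (z : q → K)
    (hb : b ∉ LinearMap.range M.mulVecLin) (hz : M *ᵥ z = 0) (hcz : c ⬝ᵥ z = 1) :
    M.rank < (M + Matrix.vecMulVec b c).rank := by
  classical
  set M' := M + Matrix.vecMulVec b c with hM'
  have hbmem : b ∈ LinearMap.range M'.mulVecLin := by
    refine ⟨z, ?_⟩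
    simp only [Matrix.mulVecLin_apply, hM', Matrix.add_mulVec, hz, _root_.vecMulVec_mulVec, hcz]
    simp
  have hsub : ∀ x : q → K, M *ᵥ x ∈ LinearMap.range M'.mulVecLin := by
    intro x
    refine ⟨x - (c ⬝ᵥ x) • z, ?_⟩
    simp only [Matrix.mulVecLin_apply, hM', Matrix.add_mulVec, _root_.vecMulVec_mulVec]
    rw [Matrix.mulVec_sub, Matrix.mulVec_smul, hz]
    rw [dotProduct_sub, dotProduct_smul, hcz]
    simp
  have hle : LinearMap.range M.mulVecLin ⊔ Submodule.span K {b} ≤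
      LinearMap.range M'.mulVecLin := by
    refine sup_le ?_ ?_
    · rintro v ⟨x, rfl⟩; exact hsub x
    · rw [Submodule.span_singleton_le_iff_mem]; exact hbmem
  have hlt : LinearMap.range M.mulVecLin < LinearMap.range M.mulVecLin ⊔
      Submodule.span K {b} := by
    refine lt_of_le_of_ne le_sup_left ?_
    intro heq
    have hbmem2 : b ∈ LinearMap.range M.mulVecLin ⊔ Submodule.span K {b} :=
      Submodule.mem_sup_right (Submodule.mem_span_singleton_self b)
    rw [← heq] at hbmem2
    exact hb hbmem2
  calc M.rank < Module.finrank K ↥(LinearMap.range M.mulVecLin ⊔ Submodule.span K {b}) :=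
        Submodule.finrank_lt_finrank_of_lt hlt
    _ ≤ M'.rank := Submodule.finrank_mono hle

/-- single channel rank increase step -/
lemma single_step (M : Matrix p q K) (Bh : Matrix p r K) (Ch : Matrix s q K) {nn : ℕ}
    (hcol : nn ≤ (Matrix.fromCols M Bh).rank)
    (hrow : nn ≤ (Matrix.fromRows M Ch).rank)
    (hlt : M.rank < nn) :
    ∃ G : Matrix r s K, M.rank < (M + Bh * G * Ch).rank := by
  classical
  -- get g with Bh *ᵥ g ∉ range
  have hg : ∃ g : r → K, Bh *ᵥ g ∉ LinearMap.range M.mulVecLin := by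
    by_contra hcon
    push_neg at hcon
    have : (Matrix.fromCols M Bh).rank ≤ M.rank := by
      apply rank_le_of_cols_mem
      rintro (c | c)
      · exact Submodule.subset_span ⟨c, rfl⟩
      · have h1 : (Matrix.fromCols M Bh)ᵀ (Sum.inr c) = Bh *ᵥ (Pi.single c 1) := by
          funext i
          simp [Matrix.mulVec_single, Matrix.transpose_apply]
        rw [h1]
        change _ ∈ Submodule.span K (Set.range M.col)
        rw [← Matrix.range_mulVecLin]
        exact hcon _
    omega
  obtain ⟨g, hgmem⟩ := hg
  -- get z in ker M with Ch z ≠ 0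
  have hzex : ∃ z : q → K, M *ᵥ z = 0 ∧ Ch *ᵥ z ≠ 0 := by
    by_contra hcon
    push_neg at hcon
    have hker : LinearMap.ker (Matrix.fromRows M Ch).mulVecLin = LinearMap.ker M.mulVecLin := by
      ext x
      simp only [LinearMap.mem_ker, Matrix.mulVecLin_apply, Matrix.fromRows_mulVec]
      constructor
      · intro hx
        have := congrFun hx
        funext i
        exact this (Sum.inl i)
      · intro hx
        rw [hx, hcon x hx]
        funext i
        cases i <;> simp
    have h1 := LinearMap.finrank_range_add_finrank_ker (Matrix.fromRows M Ch).mulVecLin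
    have h2 := LinearMap.finrank_range_add_finrank_ker M.mulVecLin
    rw [hker] at h1
    have : (Matrix.fromRows M Ch).rank = M.rank := by
      have e1 : (Matrix.fromRows M Ch).rank
          = Module.finrank K (LinearMap.range (Matrix.fromRows M Ch).mulVecLin) := rfl
      have e2 : M.rank = Module.finrank K (LinearMap.range M.mulVecLin) := rfl
      omega
    omega
  obtain ⟨z, hz, hCz⟩ := hzex
  obtain ⟨j, hj⟩ : ∃ j, (Ch *ᵥ z) j ≠ 0 := by
    by_contra hcon; push_neg at hcon; exact hCz (funext hcon)
  set w : s → K := Pi.single j ((Ch *ᵥ z) j)⁻¹ with hw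
  set G := Matrix.vecMulVec g w with hG
  have hBGC : Bh * G * Ch = Matrix.vecMulVec (Bh *ᵥ g) (w ᵥ* Ch) := by
    simp only [hG, Matrix.vecMulVec_eq Unit, Matrix.replicateCol_mulVec, Matrix.replicateRow_vecMul,
      Matrix.mul_assoc]
  refine ⟨G, ?_⟩
  rw [hBGC]
  apply rank_lt_rank_add_vecMulVec M (Bh *ᵥ g) (w ᵥ* Ch) z hgmem hz
  rw [← Matrix.dotProduct_mulVec, hw]
  simp [Pi.single_apply, dotProduct, Finset.sum_ite_eq]
  exact inv_mul_cancel₀ hj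

end SingleChannel

section SingleChannel2
variable {p q r s : Type*} [Fintype p] [Fintype q] [Fintype r] [Fintype s]
  [DecidableEq p] [DecidableEq q] [DecidableEq r] [DecidableEq s]

lemma single_channel_aux (nn t : ℕ) (Bh : Matrix p r K) (Ch : Matrix s q K) :
    ∀ M : Matrix p q K, nn ≤ (Matrix.fromCols M Bh).rank →
    nn ≤ (Matrix.fromRows M Ch).rank → nn ≤ t + M.rank →
    ∃ G : Matrix r s K, nn ≤ (M + Bh * G * Ch).rank := by
  induction t with
  | zero =>
    intro M _ _ ht
    exact ⟨0, by simpa using ht⟩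
  | succ t ih =>
    intro M hcol hrow ht
    by_cases hn : nn ≤ M.rank
    · exact ⟨0, by simpa using hn⟩
    · push_neg at hn
      obtain ⟨G₀, hG₀⟩ := single_step M Bh Ch hcol hrow hn
      set M' := M + Bh * G₀ * Ch with hM'
      have hcol' : nn ≤ (Matrix.fromCols M' Bh).rank := by
        have heq : Matrix.fromCols M' Bh =
            (Matrix.fromCols M Bh) * (Matrix.fromBlocks 1 0 (G₀ * Ch) 1 : Matrix (q ⊕ r) (q ⊕ r) K) := by
          rw [Matrix.fromCols_mul_fromBlocks]
          simp [hM', Matrix.mul_assoc]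
        rw [heq, Matrix.rank_mul_eq_left_of_isUnit_det]
        · exact hcol
        · rw [Matrix.det_fromBlocks_zero₁₂]
          simp
      have hrow' : nn ≤ (Matrix.fromRows M' Ch).rank := by
        have heq : Matrix.fromRows M' Ch =
            (Matrix.fromBlocks 1 (Bh * G₀) 0 1 : Matrix (p ⊕ s) (p ⊕ s) K) * (Matrix.fromRows M Ch) := by
          rw [Matrix.fromBlocks_mul_fromRows]
          simp [hM', Matrix.mul_assoc]
        rw [heq, Matrix.rank_mul_eq_right_of_isUnit_det]
        · exact hrow
        · rw [Matrix.det_fromBlocks_zero₂₁]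
          simp
      obtain ⟨G', hG'⟩ := ih M' hcol' hrow' (by omega)
      refine ⟨G₀ + G', ?_⟩
      have : M + Bh * (G₀ + G') * Ch = M' + Bh * G' * Ch := by
        rw [hM', Matrix.mul_add, Matrix.add_mul, add_assoc]
      rwa [this]

end SingleChannel2

section PolyTools

open MvPolynomial

variable {σ : Type*}

lemma real_coeff_decomp (p : MvPolynomial σ ℂ) :
    ∃ p₁ p₂ : MvPolynomial σ ℝ,
      p = map Complex.ofRealHom p₁ + MvPolynomial.C Complex.I * map Complex.ofRealHom p₂ := by
  classical
  refine ⟨∑ d ∈ p.support, monomial d ((p.coeff d).re),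
         ∑ d ∈ p.support, monomial d ((p.coeff d).im), ?_⟩
  apply MvPolynomial.ext
  intro d
  simp only [coeff_add, coeff_C_mul, coeff_map]
  have hre : (∑ d' ∈ p.support, monomial d' ((p.coeff d').re)).coeff d = (p.coeff d).re := by
    rw [MvPolynomial.coeff_sum]
    simp only [coeff_monomial]
    by_cases hd : d ∈ p.support
    · rw [Finset.sum_eq_single d]
      · simp
      · intro b _ hb; rw [if_neg (by exact fun h => hb h)]
      · intro h; exact absurd hd h
    · rw [Finset.sum_eq_zero]
      · have := MvPolynomial.notMem_support_iff.1 hd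
        simp [this]
      · intro b hb
        rw [if_neg]
        intro h
        exact hd (h ▸ hb)
  have him : (∑ d' ∈ p.support, monomial d' ((p.coeff d').im)).coeff d = (p.coeff d).im := by
    rw [MvPolynomial.coeff_sum]
    simp only [coeff_monomial]
    by_cases hd : d ∈ p.support
    · rw [Finset.sum_eq_single d]
      · simp
      · intro b _ hb; rw [if_neg (by exact fun h => hb h)]
      · intro h; exact absurd hd h
    · rw [Finset.sum_eq_zero]
      · have := MvPolynomial.notMem_support_iff.1 hd
        simp [this]
      · intro b hb
        rw [if_neg]
        intro h
        exact hd (h ▸ hb)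
  rw [hre, him]
  apply Complex.ext <;> simp

lemma eval_ofReal_map (q : MvPolynomial σ ℝ) (x : σ → ℝ) :
    eval (fun s => (x s : ℂ)) (map Complex.ofRealHom q) = ((eval x q : ℝ) : ℂ) := by
  rw [eval_map]
  have h := eval₂_comp_left Complex.ofRealHom (RingHom.id ℝ) x q
  rw [MvPolynomial.eval₂_id, RingHom.comp_id] at h
  exact h.symm

lemma mvpoly_zero_of_real_eval (p : MvPolynomial σ ℂ)
    (h : ∀ x : σ → ℝ, eval (fun s => (x s : ℂ)) p = 0) : p = 0 := by
  obtain ⟨p₁, p₂, rfl⟩ := real_coeff_decomp p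
  have h12 : ∀ x : σ → ℝ, eval x p₁ = 0 ∧ eval x p₂ = 0 := by
    intro x
    have := h x
    rw [map_add, _root_.map_mul, eval_ofReal_map, eval_ofReal_map, eval_C] at this
    have hre := congrArg Complex.re this
    have him := congrArg Complex.im this
    simp at hre him
    exact ⟨hre, him⟩
  have h1 : p₁ = 0 := MvPolynomial.funext (fun x => by rw [(h12 x).1, map_zero])
  have h2 : p₂ = 0 := MvPolynomial.funext (fun x => by rw [(h12 x).2, map_zero])
  rw [h1, h2]
  simp

lemma exists_real_eval_ne_zero (p : MvPolynomial σ ℂ) (hp : p ≠ 0) :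
    ∃ x : σ → ℝ, eval (fun s => (x s : ℂ)) p ≠ 0 := by
  by_contra h
  push_neg at h
  exact hp (mvpoly_zero_of_real_eval p h)

lemma exists_common_nonzero {ι : Type*} (ps : Finset ι) (q : ι → MvPolynomial σ ℂ)
    (hne : ∀ i ∈ ps, q i ≠ 0) :
    ∃ x : σ → ℂ, ∀ i ∈ ps, eval x (q i) ≠ 0 := by
  classical
  have hP : (∏ i ∈ ps, q i) ≠ 0 := Finset.prod_ne_zero_iff.2 hne
  have : ∃ x : σ → ℂ, eval x (∏ i ∈ ps, q i) ≠ 0 := by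
    by_contra h
    push_neg at h
    exact hP (MvPolynomial.funext (fun x => by rw [h x, map_zero]))
  obtain ⟨x, hx⟩ := this
  rw [map_prod] at hx
  exact ⟨x, fun i hi => Finset.prod_ne_zero_iff.1 hx i hi⟩

end PolyTools

section System

variable {n k : ℕ} {m l : Fin k → ℕ}

def Nmat (m l : Fin k → ℕ) (Bc : ∀ i, Matrix (Fin n) (Fin (m i)) ℂ) (Cc : ∀ i, Matrix (Fin (l i)) (Fin n) ℂ)
    (A' : Matrix (Fin n) (Fin n) ℂ) (S U : Finset (Fin k)) :
    Matrix (Fin n ⊕ (i : Fin k) × Fin (l i)) (Fin n ⊕ (i : Fin k) × Fin (m i)) ℂ :=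
  Matrix.fromBlocks A'
    (Matrix.of fun a c => if c.1 ∈ S then Bc c.1 a c.2 else 0)
    (Matrix.of fun c b => if c.1 ∈ U then Cc c.1 c.2 b else 0) 0

def Bhat (m l : Fin k → ℕ) (Bc : ∀ i, Matrix (Fin n) (Fin (m i)) ℂ) (a : Fin k) :
    Matrix (Fin n ⊕ (i : Fin k) × Fin (l i)) (Fin (m a)) ℂ :=
  Matrix.fromRows (Bc a) 0

def Chat (m l : Fin k → ℕ) (Cc : ∀ i, Matrix (Fin (l i)) (Fin n) ℂ) (a : Fin k) :
    Matrix (Fin (l a)) (Fin n ⊕ (i : Fin k) × Fin (m i)) ℂ :=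
  Matrix.fromCols (Cc a) 0

variable (Bc : ∀ i, Matrix (Fin n) (Fin (m i)) ℂ) (Cc : ∀ i, Matrix (Fin (l i)) (Fin n) ℂ)

lemma Bhat_mul_Chat (a : Fin k) (G : Matrix (Fin (m a)) (Fin (l a)) ℂ) :
    Bhat m l Bc a * G * Chat m l Cc a = Matrix.fromBlocks (Bc a * G * Cc a) 0 0 0 := by
  rw [Bhat, Chat, Matrix.fromRows_mul, Matrix.fromRows_mul, Matrix.zero_mul, Matrix.zero_mul,
    Matrix.mul_fromCols, Matrix.mul_zero, ← Matrix.fromRows_fromCols_eq_fromBlocks,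
    Matrix.fromCols_zero]

lemma Nmat_add (A' : Matrix (Fin n) (Fin n) ℂ) (S U : Finset (Fin k)) (a : Fin k)
    (G : Matrix (Fin (m a)) (Fin (l a)) ℂ) :
    Nmat m l Bc Cc (A' + Bc a * G * Cc a) S U = Nmat m l Bc Cc A' S U + Bhat m l Bc a * G * Chat m l Cc a := by
  rw [Bhat_mul_Chat, Nmat, Nmat, Matrix.fromBlocks_add]
  simp

lemma rank_insert_col (A' : Matrix (Fin n) (Fin n) ℂ) (S U : Finset (Fin k)) (a : Fin k)
    (haS : a ∉ S) :
    (Nmat m l Bc Cc A' (insert a S) U).rank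
      = (Matrix.fromCols (Nmat m l Bc Cc A' S U) (Bhat m l Bc a)).rank := by
  classical
  apply le_antisymm
  · apply rank_le_of_cols_mem
    rintro (b | ⟨i, x⟩)
    · apply Submodule.subset_span
      refine ⟨Sum.inl (Sum.inl b), ?_⟩
      funext r; cases r <;> simp [Nmat]
    · by_cases hia : i = a
      · subst hia
        apply Submodule.subset_span
        refine ⟨Sum.inr x, ?_⟩
        funext r; cases r <;> simp [Nmat, Bhat]
      · by_cases hiS : i ∈ S
        · apply Submodule.subset_span
          refine ⟨Sum.inl (Sum.inr ⟨i, x⟩), ?_⟩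
          funext r; cases r <;> simp [Nmat, hiS, hia]
        · have hz : (Nmat m l Bc Cc A' (insert a S) U)ᵀ (Sum.inr ⟨i, x⟩) = 0 := by
            funext r; cases r <;>
              simp [Nmat, Finset.mem_insert, hia, hiS]
          rw [hz]
          exact Submodule.zero_mem _
  · apply rank_le_of_cols_mem
    rintro ((b | ⟨i, x⟩) | x)
    · apply Submodule.subset_span
      refine ⟨Sum.inl b, ?_⟩
      funext r; cases r <;> simp [Nmat]
    · by_cases hiS : i ∈ S
      · apply Submodule.subset_span
        refine ⟨Sum.inr ⟨i, x⟩, ?_⟩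
        funext r; cases r <;>
          simp [Nmat, hiS, Finset.mem_insert, (by rintro rfl; exact haS hiS : ¬ i = a)]
      · have hz : (Matrix.fromCols (Nmat m l Bc Cc A' S U) (Bhat m l Bc a))ᵀ
            (Sum.inl (Sum.inr ⟨i, x⟩)) = 0 := by
          funext r; cases r <;> simp [Nmat, hiS]
        rw [hz]
        exact Submodule.zero_mem _
    · apply Submodule.subset_span
      refine ⟨Sum.inr ⟨a, x⟩, ?_⟩
      funext r; cases r <;> simp [Nmat, Bhat]

lemma rank_insert_row (A' : Matrix (Fin n) (Fin n) ℂ) (S U : Finset (Fin k)) (a : Fin k)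
    (haU : a ∉ U) :
    (Nmat m l Bc Cc A' S (insert a U)).rank
      = (Matrix.fromRows (Nmat m l Bc Cc A' S U) (Chat m l Cc a)).rank := by
  classical
  apply le_antisymm
  · apply rank_le_of_rows_mem
    rintro (b | ⟨j, y⟩)
    · apply Submodule.subset_span
      refine ⟨Sum.inl (Sum.inl b), ?_⟩
      funext c; cases c <;> simp [Nmat]
    · by_cases hja : j = a
      · subst hja
        apply Submodule.subset_span
        refine ⟨Sum.inr y, ?_⟩
        funext c; cases c <;> simp [Nmat, Chat]
      · by_cases hjU : j ∈ U
        · apply Submodule.subset_span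
          refine ⟨Sum.inl (Sum.inr ⟨j, y⟩), ?_⟩
          funext c; cases c <;> simp [Nmat, hjU, hja]
        · have hz : (Nmat m l Bc Cc A' S (insert a U)) (Sum.inr ⟨j, y⟩) = 0 := by
            funext c; cases c <;> simp [Nmat, Finset.mem_insert, hja, hjU]
          rw [hz]
          exact Submodule.zero_mem _
  · apply rank_le_of_rows_mem
    rintro ((b | ⟨j, y⟩) | y)
    · apply Submodule.subset_span
      refine ⟨Sum.inl b, ?_⟩
      funext c; cases c <;> simp [Nmat]
    · by_cases hjU : j ∈ U
      · apply Submodule.subset_span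
        refine ⟨Sum.inr ⟨j, y⟩, ?_⟩
        funext c; cases c <;>
          simp [Nmat, hjU, Finset.mem_insert, (by rintro rfl; exact haU hjU : ¬ j = a)]
      · have hz : (Matrix.fromRows (Nmat m l Bc Cc A' S U) (Chat m l Cc a))
            (Sum.inl (Sum.inr ⟨j, y⟩)) = 0 := by
          funext c; cases c <;> simp [Nmat, hjU]
        rw [hz]
        exact Submodule.zero_mem _
    · apply Submodule.subset_span
      refine ⟨Sum.inr ⟨a, y⟩, ?_⟩
      funext c; cases c <;> simp [Nmat, Chat]

lemma rank_Nmat_empty (A' : Matrix (Fin n) (Fin n) ℂ) :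
    (Nmat m l Bc Cc A' ∅ ∅).rank = A'.rank := by
  classical
  have hN : Nmat m l Bc Cc A' ∅ ∅ = Matrix.fromBlocks A' 0 0 0 := by
    ext (r | r) (c | c) <;> simp [Nmat]
  have hprod : (Matrix.fromRows (1 : Matrix (Fin n) (Fin n) ℂ)
        (0 : Matrix ((i : Fin k) × Fin (l i)) (Fin n) ℂ)) * A' *
      (Matrix.fromCols (1 : Matrix (Fin n) (Fin n) ℂ)
        (0 : Matrix (Fin n) ((i : Fin k) × Fin (m i)) ℂ))
      = Matrix.fromBlocks A' 0 0 0 := by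
    rw [Matrix.fromRows_mul, Matrix.one_mul, Matrix.zero_mul, Matrix.mul_fromCols,
      Matrix.mul_one, Matrix.mul_zero, ← Matrix.fromCols_fromRows_eq_fromBlocks,
      Matrix.fromRows_zero]
  apply le_antisymm
  · rw [hN, ← hprod]
    exact le_trans (Matrix.rank_mul_le_left _ _) (Matrix.rank_mul_le_right _ _)
  · have hA : A' = (Nmat m l Bc Cc A' ∅ ∅).submatrix Sum.inl Sum.inl := by
      ext r c; simp [Nmat]
    calc A'.rank = ((Nmat m l Bc Cc A' ∅ ∅).submatrix Sum.inl Sum.inl).rank := by rw [← hA]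
      _ ≤ _ := rank_submatrix_le' _ _ _


lemma main_induction (T : Finset (Fin k)) :
    ∀ A' : Matrix (Fin n) (Fin n) ℂ,
      (∀ S ⊆ T, n ≤ (Nmat m l Bc Cc A' S (T \ S)).rank) →
      ∃ F : ∀ i, Matrix (Fin (m i)) (Fin (l i)) ℂ,
        (A' + ∑ i ∈ T, Bc i * F i * Cc i).det ≠ 0 := by
  classical
  induction T using Finset.induction_on with
  | empty =>
    intro A' h
    have h0 := h ∅ (Finset.Subset.refl _)
    rw [Finset.sdiff_empty, rank_Nmat_empty] at h0
    refine ⟨fun _ => 0, ?_⟩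
    rw [Finset.sum_empty, add_zero]
    exact det_ne_zero_of_rank_le A' (by simpa using h0)
  | @insert a T' ha IH =>
    intro A' h
    have KEY : ∀ S ∈ T'.powerset,
        ∃ qp : MvPolynomial (Fin (m a) × Fin (l a)) ℂ, qp ≠ 0 ∧
          ∀ x : (Fin (m a) × Fin (l a)) → ℂ, MvPolynomial.eval x qp ≠ 0 →
            n ≤ (Nmat m l Bc Cc
              (A' + Bc a * (Matrix.of fun p q' => x (p, q')) * Cc a) S (T' \ S)).rank := by
      intro S hS
      rw [Finset.mem_powerset] at hS
      have haS : a ∉ S := fun haS => ha (hS haS)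
      have haT'S : a ∉ T' \ S := fun hmem => ha (Finset.mem_sdiff.1 hmem).1
      have hsd1 : insert a T' \ insert a S = T' \ S := by
        ext x
        simp only [Finset.mem_sdiff, Finset.mem_insert]
        constructor
        · rintro ⟨rfl | h1, h2⟩
          · exact absurd (Or.inl rfl) h2
          · exact ⟨h1, fun hx => h2 (Or.inr hx)⟩
        · rintro ⟨h1, h2⟩
          refine ⟨Or.inr h1, ?_⟩
          rintro (rfl | hx)
          exacts [ha h1, h2 hx]
      have hsd2 : insert a T' \ S = insert a (T' \ S) := by
        ext x
        simp only [Finset.mem_sdiff, Finset.mem_insert]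
        constructor
        · rintro ⟨rfl | h1, h2⟩
          · exact Or.inl rfl
          · exact Or.inr ⟨h1, h2⟩
        · rintro (rfl | ⟨h1, h2⟩)
          · exact ⟨Or.inl rfl, fun hx => haS hx⟩
          · exact ⟨Or.inr h1, h2⟩
      have h1 : n ≤ (Matrix.fromCols (Nmat m l Bc Cc A' S (T' \ S)) (Bhat m l Bc a)).rank := by
        rw [← rank_insert_col Bc Cc A' S (T' \ S) a haS]
        have := h (insert a S) (Finset.insert_subset_insert a hS)
        rwa [hsd1] at this
      have h2 : n ≤ (Matrix.fromRows (Nmat m l Bc Cc A' S (T' \ S)) (Chat m l Cc a)).rank := by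
        rw [← rank_insert_row Bc Cc A' S (T' \ S) a haT'S]
        have := h S (hS.trans (Finset.subset_insert a T'))
        rwa [hsd2] at this
      obtain ⟨G, hG⟩ := single_channel_aux n n (Bhat m l Bc a) (Chat m l Cc a)
        (Nmat m l Bc Cc A' S (T' \ S)) h1 h2 (by omega)
      obtain ⟨f, g, hdet⟩ := exists_submatrix_det_ne_zero _ hG
      set RX : Matrix (Fin (m a)) (Fin (l a)) (MvPolynomial (Fin (m a) × Fin (l a)) ℂ) :=
        Matrix.of fun p q' => MvPolynomial.X (p, q') with hRX
      set PM := (Nmat m l Bc Cc A' S (T' \ S)).map (MvPolynomial.C)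
        + (Bhat m l Bc a).map (MvPolynomial.C (σ := Fin (m a) × Fin (l a))) * RX * (Chat m l Cc a).map (MvPolynomial.C (σ := Fin (m a) × Fin (l a))) with hPM
      have heval : ∀ x : (Fin (m a) × Fin (l a)) → ℂ,
          PM.map (MvPolynomial.eval x)
            = Nmat m l Bc Cc A' S (T' \ S)
              + Bhat m l Bc a * (Matrix.of fun p q' => x (p, q')) * Chat m l Cc a := by
        intro x
        have hme : ∀ {α β : Type} [inst : Fintype α] [inst2 : Fintype β]
            (M : Matrix α β ℂ), (M.map (MvPolynomial.C (σ := Fin (m a) × Fin (l a)))).map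
              (MvPolynomial.eval x) = M := by
          intro α β _ _ M
          rw [Matrix.map_map]
          convert Matrix.map_id M
          funext c
          simp
        rw [hPM]
        rw [Matrix.map_add (f := MvPolynomial.eval x) (fun a b => by simp)]
        rw [Matrix.map_mul (f := (MvPolynomial.eval x : MvPolynomial _ ℂ →+* ℂ))]
        rw [Matrix.map_mul (f := (MvPolynomial.eval x : MvPolynomial _ ℂ →+* ℂ))]
        rw [hme, hme, hme]
        congr 1
        congr 1
        congr 1
        funext p q'
        simp [hRX]
      refine ⟨(PM.submatrix f g).det, ?_, ?_⟩
      · intro h0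
        apply hdet
        have hc := congrArg (MvPolynomial.eval (fun pq => G pq.1 pq.2)) h0
        rw [RingHom.map_det, map_zero, RingHom.mapMatrix_apply, ← Matrix.submatrix_map,
          heval] at hc
        rw [show (Matrix.of fun p q' => G (p, q').1 (p, q').2) = G from by ext p q'; rfl] at hc
        exact hc
      · intro x hx
        apply rank_ge_of_submatrix_det _ f g
        rw [Nmat_add]
        have hc : MvPolynomial.eval x (PM.submatrix f g).det
            = (((Nmat m l Bc Cc A' S (T' \ S)
              + Bhat m l Bc a * (Matrix.of fun p q' => x (p, q')) * Chat m l Cc a)).submatrix f g).det := by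
          rw [RingHom.map_det, RingHom.mapMatrix_apply, ← Matrix.submatrix_map, heval]
        rw [← hc]
        exact hx
    choose qf hq0 hq using KEY
    obtain ⟨x, hx⟩ := exists_common_nonzero (Finset.univ : Finset {S // S ∈ T'.powerset})
      (fun S => qf S.1 S.2) (fun S _ => hq0 S.1 S.2)
    set G : Matrix (Fin (m a)) (Fin (l a)) ℂ := Matrix.of fun p q' => x (p, q') with hGdef
    have hrk : ∀ S ⊆ T', n ≤ (Nmat m l Bc Cc (A' + Bc a * G * Cc a) S (T' \ S)).rank := by
      intro S hS
      exact hq S (Finset.mem_powerset.2 hS) x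
        (hx ⟨S, Finset.mem_powerset.2 hS⟩ (Finset.mem_univ _))
    obtain ⟨F', hF'⟩ := IH (A' + Bc a * G * Cc a) hrk
    refine ⟨Function.update F' a G, ?_⟩
    rw [Finset.sum_insert ha]
    rw [Finset.sum_congr rfl (fun i hi => by
      rw [Function.update_of_ne (ne_of_mem_of_not_mem hi ha) G F'])]
    rw [Function.update_self]
    rw [← add_assoc]
    exact hF'

end System

section MorePad
variable {K : Type*} [Field K] {p q p' q' : Type*} [Fintype p] [Fintype q] [Fintype p'] [Fintype q']

lemma rank_eq_of_col_padding (M : Matrix p q K) (M' : Matrix p q' K) (g : q → q')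
    (hg : Function.Injective g)
    (h1 : ∀ x y, M' x (g y) = M x y)
    (h2 : ∀ c, (∀ y, c ≠ g y) → ∀ x, M' x c = 0) :
    M'.rank = M.rank := by
  rw [← Matrix.rank_transpose M', ← Matrix.rank_transpose M]
  exact rank_eq_of_row_padding Mᵀ M'ᵀ g hg (fun x y => h1 y x) (fun r hr y => h2 r hr y)

lemma matrix_map_sum {α β : Type*} [AddCommMonoid α] [AddCommMonoid β] {ι : Type*}
    (φ : α →+ β) (s : Finset ι) (Ms : ι → Matrix p q α) :
    (∑ i ∈ s, Ms i).map φ = ∑ i ∈ s, (Ms i).map φ := by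
  ext r c
  simp [Matrix.sum_apply, Matrix.map_apply]

lemma matrix_map_add {α β : Type*} [AddCommMonoid α] [AddCommMonoid β]
    (φ : α →+ β) (M N : Matrix p q α) :
    (M + N).map φ = M.map φ + N.map φ := by
  ext r c
  simp [Matrix.map_apply]

end MorePad

section MorePad2
variable {p q : Type*} [Fintype p] [Fintype q]

lemma matrix_map_sum' {α β : Type*} [NonAssocSemiring α] [NonAssocSemiring β] {ι : Type*}
    (φ : α →+* β) (s : Finset ι) (Ms : ι → Matrix p q α) :
    (∑ i ∈ s, Ms i).map φ = ∑ i ∈ s, (Ms i).map φ := by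
  ext r c
  simp [Matrix.sum_apply, Matrix.map_apply]

lemma matrix_map_add' {α β : Type*} [NonAssocSemiring α] [NonAssocSemiring β]
    (φ : α →+* β) (M N : Matrix p q α) :
    (M + N).map φ = M.map φ + N.map φ := by
  ext r c
  simp [Matrix.map_apply]

end MorePad2

/-- necessity: if rank (λI − A − ∑ Bᵢ Fᵢ Cᵢ) < n for every
choice of feedback matrices Fᵢ, then there is S ⊆ {1,…,k} with
rank [[λI − A, B_S],[C_{Sᶜ}, 0]] < n. -/
theorem fixed_spectrum_necessity (n k : ℕ) (m l : Fin k → ℕ)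
    (A : Matrix (Fin n) (Fin n) ℝ)
    (B : ∀ i, Matrix (Fin n) (Fin (m i)) ℝ)
    (C : ∀ i, Matrix (Fin (l i)) (Fin n) ℝ)
    (lam : ℂ)
    (h : ∀ F : ∀ i, Matrix (Fin (m i)) (Fin (l i)) ℝ,
        (lam • (1 : Matrix (Fin n) (Fin n) ℂ) -
          (A + ∑ i, B i * F i * C i).map (fun x => (x : ℂ))).rank < n) :
    ∃ S : Finset (Fin k),
      (Matrix.fromBlocks
        (lam • (1 : Matrix (Fin n) (Fin n) ℂ) - A.map (fun x => (x : ℂ)))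
        (Matrix.of fun (a : Fin n) (c : (i : S) × Fin (m i.1)) =>
          ((B c.1 a c.2 : ℝ) : ℂ))
        (Matrix.of fun (c : (j : ↥(Sᶜ)) × Fin (l j.1)) (b : Fin n) =>
          ((C c.1 c.2 b : ℝ) : ℂ))
        0).rank < n := by
  classical
  by_contra hcon
  push_neg at hcon
  set Bc : ∀ i, Matrix (Fin n) (Fin (m i)) ℂ := fun i => (B i).map (fun x => (x : ℂ)) with hBc
  set Cc : ∀ i, Matrix (Fin (l i)) (Fin n) ℂ := fun i => (C i).map (fun x => (x : ℂ)) with hCc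
  set A0 : Matrix (Fin n) (Fin n) ℂ :=
    lam • (1 : Matrix (Fin n) (Fin n) ℂ) - A.map (fun x => (x : ℂ)) with hA0
  -- rank transfer to the full-index masked matrices
  have hrank : ∀ S : Finset (Fin k), n ≤ (Nmat m l Bc Cc A0 S Sᶜ).rank := by
    intro S
    have hg := hcon S
    set Mid : Matrix (Fin n ⊕ (i : Fin k) × Fin (l i)) (Fin n ⊕ (i : ↥S) × Fin (m i.1)) ℂ :=
      Matrix.fromBlocks A0 (Matrix.of fun a c => Bc c.1.1 a c.2)
        (Matrix.of fun c b => if c.1 ∈ Sᶜ then Cc c.1 c.2 b else 0) 0 with hMid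
    have hι : Function.Injective
        (fun c : (j : ↥(Sᶜ)) × Fin (l j.1) => (⟨c.1.1, c.2⟩ : (i : Fin k) × Fin (l i))) := by
      rintro ⟨j, q⟩ ⟨j', q'⟩ hh
      injection hh with h1' h2'
      have hjj : j = j' := Subtype.ext h1'
      subst hjj
      exact congrArg (Sigma.mk j) (eq_of_heq h2')
    have step1 : Mid.rank =
        (Matrix.fromBlocks A0
          (Matrix.of fun (a : Fin n) (c : (i : S) × Fin (m i.1)) => ((B c.1 a c.2 : ℝ) : ℂ))
          (Matrix.of fun (c : (j : ↥(Sᶜ)) × Fin (l j.1)) (b : Fin n) => ((C c.1 c.2 b : ℝ) : ℂ))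
          0).rank := by
      apply rank_eq_of_row_padding
        (f := Sum.map id (fun c : (j : ↥(Sᶜ)) × Fin (l j.1) => (⟨c.1.1, c.2⟩ : (i : Fin k) × Fin (l i))))
      · exact Function.injective_id.sumMap hι
      · rintro (b | ⟨j, q⟩) (c | d)
        · simp [hMid]
        · simp [hMid, hBc, Matrix.map_apply]
        · have hjS : (j : Fin k) ∉ S := Finset.mem_compl.1 j.2
          simp [hMid, hCc, Matrix.map_apply, hjS]
        · simp [hMid]
      · rintro (b | ⟨j, q⟩) hr y
        · exact (hr (Sum.inl b) (by simp)).elim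
        · have hj : j ∉ Sᶜ := by
            intro hj
            exact (hr (Sum.inr ⟨⟨j, hj⟩, q⟩)) (by simp)
          have hj' : j ∈ S := Finset.notMem_compl.1 hj
          cases y with
          | inl c => simp [hMid, hj']
          | inr d => simp [hMid]
    have hι' : Function.Injective
        (fun c : (i : ↥S) × Fin (m i.1) => (⟨c.1.1, c.2⟩ : (i : Fin k) × Fin (m i))) := by
      rintro ⟨j, q⟩ ⟨j', q'⟩ hh
      injection hh with h1' h2'
      have hjj : j = j' := Subtype.ext h1'
      subst hjj
      exact congrArg (Sigma.mk j) (eq_of_heq h2')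
    have step2 : (Nmat m l Bc Cc A0 S Sᶜ).rank = Mid.rank := by
      apply rank_eq_of_col_padding Mid (Nmat m l Bc Cc A0 S Sᶜ)
        (Sum.map id (fun c : (i : ↥S) × Fin (m i.1) => (⟨c.1.1, c.2⟩ : (i : Fin k) × Fin (m i))))
        (Function.injective_id.sumMap hι')
      · rintro (b | ⟨j, q⟩) (c | d)
        · simp [hMid, Nmat]
        · have : (d.1 : Fin k) ∈ S := d.1.2
          simp [hMid, Nmat, this]
        · simp [hMid, Nmat]
        · simp [hMid, Nmat]
      · rintro (c | e) hr x
        · exact (hr (Sum.inl c) (by simp)).elim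
        · have he : e.1 ∉ S := by
            intro he
            refine (hr (Sum.inr ⟨⟨e.1, he⟩, e.2⟩)) ?_
            simp
          cases x with
          | inl b => simp [Nmat, he]
          | inr d => simp [Nmat]
    rw [step2, step1]
    exact hg
  have hmain : ∀ S ⊆ Finset.univ, n ≤ (Nmat m l Bc Cc A0 S (Finset.univ \ S)).rank := by
    intro S _
    rw [← Finset.compl_eq_univ_sdiff]
    exact hrank S
  obtain ⟨F₀, hF₀⟩ := main_induction Bc Cc Finset.univ A0 hmain
  -- polynomial over all channels
  set QM : Matrix (Fin n) (Fin n) (MvPolynomial ((i : Fin k) × (Fin (m i) × Fin (l i))) ℂ) :=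
    A0.map MvPolynomial.C + ∑ i, (Bc i).map (MvPolynomial.C (σ := (j : Fin k) × (Fin (m j) × Fin (l j)))) *
      (Matrix.of fun p q => MvPolynomial.X ⟨i, (p, q)⟩ : Matrix (Fin (m i)) (Fin (l i)) (MvPolynomial ((j : Fin k) × (Fin (m j) × Fin (l j))) ℂ)) * (Cc i).map (MvPolynomial.C (σ := (j : Fin k) × (Fin (m j) × Fin (l j)))) with hQM
  have hevalQ : ∀ x : ((i : Fin k) × (Fin (m i) × Fin (l i))) → ℂ,
      QM.map (MvPolynomial.eval x) = A0 + ∑ i, Bc i *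
        (Matrix.of fun p q => x ⟨i, (p, q)⟩) * Cc i := by
    intro x
    have hme : ∀ {α β : Type} [Fintype α] [Fintype β] (M : Matrix α β ℂ),
        (M.map (MvPolynomial.C (σ := (i : Fin k) × (Fin (m i) × Fin (l i))))).map
          (MvPolynomial.eval x) = M := by
      intro α β _ _ M
      rw [Matrix.map_map]
      convert Matrix.map_id M
      funext c
      simp
    rw [hQM, matrix_map_add' (MvPolynomial.eval x), matrix_map_sum' (MvPolynomial.eval x)]
    rw [hme]
    congr 1
    apply Finset.sum_congr rfl
    intro i _
    rw [Matrix.map_mul (f := (MvPolynomial.eval x : MvPolynomial _ ℂ →+* ℂ))]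
    rw [Matrix.map_mul (f := (MvPolynomial.eval x : MvPolynomial _ ℂ →+* ℂ))]
    rw [hme, hme]
    congr 1
    congr 1
    ext p q
    simp
  have hQne : QM.det ≠ 0 := by
    intro h0
    apply hF₀
    have hc := congrArg (MvPolynomial.eval (fun d : (i : Fin k) × (Fin (m i) × Fin (l i)) =>
      F₀ d.1 d.2.1 d.2.2)) h0
    rw [RingHom.map_det, map_zero, RingHom.mapMatrix_apply, hevalQ] at hc
    exact hc
  obtain ⟨y, hy⟩ := exists_real_eval_ne_zero QM.det hQne
  set F : ∀ i, Matrix (Fin (m i)) (Fin (l i)) ℝ :=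
    fun i => Matrix.of fun p q => -(y ⟨i, (p, q)⟩) with hF
  have hmat : lam • (1 : Matrix (Fin n) (Fin n) ℂ) -
      (A + ∑ i, B i * F i * C i).map (fun x => (x : ℂ))
      = QM.map (MvPolynomial.eval (fun s => ((y s : ℝ) : ℂ))) := by
    rw [hevalQ]
    have hm1 : (A + ∑ i, B i * F i * C i).map (fun x => (x : ℂ))
        = A.map (fun x => (x : ℂ)) + ∑ i, Bc i * ((F i).map (fun x => (x : ℂ))) * Cc i := by
      rw [show (fun x : ℝ => (x : ℂ)) = ⇑Complex.ofRealHom from rfl]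
      rw [matrix_map_add' Complex.ofRealHom, matrix_map_sum' Complex.ofRealHom]
      congr 1
      apply Finset.sum_congr rfl
      intro i _
      rw [Matrix.map_mul (f := Complex.ofRealHom), Matrix.map_mul (f := Complex.ofRealHom)]
      rfl
    rw [hm1]
    have hm2 : ∀ i, Bc i * ((F i).map (fun x => (x : ℂ))) * Cc i
        = -(Bc i * (Matrix.of fun p q => ((y ⟨i, (p, q)⟩ : ℝ) : ℂ)) * Cc i) := by
      intro i
      have : (F i).map (fun x => (x : ℂ))
          = -(Matrix.of fun p q => ((y ⟨i, (p, q)⟩ : ℝ) : ℂ)) := by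
        ext p q
        simp [hF, Matrix.map_apply]
      rw [this, Matrix.mul_neg, Matrix.neg_mul]
    rw [Finset.sum_congr rfl (fun i _ => hm2 i), Finset.sum_neg_distrib, hA0]
    abel
  have hFr := h F
  rw [hmat] at hFr
  have hdetne : (QM.map (MvPolynomial.eval (fun s => ((y s : ℝ) : ℂ)))).det ≠ 0 := by
    have := hy
    rw [RingHom.map_det, RingHom.mapMatrix_apply] at this
    exact this
  have : (QM.map (MvPolynomial.eval (fun s => ((y s : ℝ) : ℂ)))).rank = n := by
    rw [Matrix.rank_of_isUnit _ ((Matrix.isUnit_iff_isUnit_det _).2 (Ne.isUnit hdetne))]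
    simp
  omega
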